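/- Let F be a field of characteristic 0 or of characteristic > n, let N ∈ Mₙ(F) be the nilpotent Jordan block J_n(0), and define exp(S) = Σ_{k=0}^{n−1} S^k/k! for upper-triangular nilpotent S. Then the map (r, s₁,…,s_{n−1}) ↦ r·exp(Σ_{k=1}^{n−1} s_k N^k) is a group isomorphism from Fˣ × F^{n−1} (with componentwise multiplication on Fˣ and addition on F^{n−1}) onto the unit group F[J_n(a)]ˣ of the algebra generated by a Jordan block J_n(a). -/

import Mathlib

/-- The `m×m` Jordan block with eigenvalue `a`. -/
def jordanBlock (F : Type*) [Field F] (m : ℕ) (a : F) : Matrix (Fin m) (Fin m) F :=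
  fun i j => if (i : ℕ) = (j : ℕ) then a else if (i : ℕ) + 1 = (j : ℕ) then 1 else 0

/-- Truncated exponential `exp S = Σ_{k<n} S^k/k!` for `n×n` matrices. -/
def texp {F : Type*} [Field F] {n : ℕ} (S : Matrix (Fin n) (Fin n) F) :
    Matrix (Fin n) (Fin n) F :=
  ∑ k ∈ Finset.range n, ((Nat.factorial k : F))⁻¹ • S ^ k

namespace JordanAux

variable (F : Type*) [Field F] (n : ℕ)

/-- The nilpotent Jordan block. -/
abbrev Nmat : Matrix (Fin n) (Fin n) F := jordanBlock F n 0

/-- Filtration submodules spanned by `N^k`, `k ≥ m`. -/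
def Pm (m : ℕ) : Submodule F (Matrix (Fin n) (Fin n) F) :=
  Submodule.span F ((fun k => Nmat F n ^ k) '' Set.Ici m)

variable {F n}

lemma Nmat_apply (i j : Fin n) :
    Nmat F n i j = if (i : ℕ) + 1 = (j : ℕ) then 1 else 0 := by
  show (if (i : ℕ) = (j : ℕ) then (0:F) else if (i : ℕ) + 1 = (j : ℕ) then 1 else 0) = _
  split_ifs with h1 h2 <;> first | rfl | (exfalso; omega)

lemma Nmat_pow_apply (k : ℕ) (i j : Fin n) :
    (Nmat F n ^ k) i j = if (i : ℕ) + k = (j : ℕ) then 1 else 0 := by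
  induction k generalizing i j with
  | zero => simp [Matrix.one_apply, Fin.ext_iff]
  | succ k ih =>
    rw [pow_succ, Matrix.mul_apply]
    by_cases hl : (i : ℕ) + k < n
    · rw [Finset.sum_eq_single (⟨(i : ℕ) + k, hl⟩ : Fin n)]
      · rw [ih, Nmat_apply]
        simp only [if_pos rfl, one_mul]
        simp [← add_assoc]
      · intro b _ hb
        rw [ih]
        rw [if_neg (fun h => hb (Fin.ext h.symm)), zero_mul]
      · intro h; exact absurd (Finset.mem_univ _) h
    · rw [if_neg (by omega), Finset.sum_eq_zero]
      intro b _
      rw [ih, if_neg (by omega), zero_mul]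

lemma Nmat_pow_eq_zero {k : ℕ} (h : n ≤ k) : (Nmat F n ^ k : Matrix (Fin n) (Fin n) F) = 0 := by
  ext i j
  rw [Nmat_pow_apply]
  have : (j : ℕ) < n := j.2
  rw [if_neg (by omega)]
  rfl

lemma pow_mem_Pm {k m : ℕ} (h : m ≤ k) : Nmat F n ^ k ∈ Pm F n m :=
  Submodule.subset_span ⟨k, h, rfl⟩

lemma Pm_mono {m m' : ℕ} (h : m ≤ m') : Pm F n m' ≤ Pm F n m :=
  Submodule.span_mono (Set.image_mono (Set.Ici_subset_Ici.2 h))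

lemma Pm_bot : Pm F n n = ⊥ := by
  refine le_bot_iff.1 (Submodule.span_le.2 ?_)
  rintro x ⟨k, hk, rfl⟩
  simp [Nmat_pow_eq_zero hk]

lemma Pm_mul {x y : Matrix (Fin n) (Fin n) F} {j k : ℕ}
    (hx : x ∈ Pm F n j) (hy : y ∈ Pm F n k) : x * y ∈ Pm F n (j + k) := by
  have hle : Pm F n j * Pm F n k ≤ Pm F n (j + k) := by
    rw [Pm, Pm, Submodule.span_mul_span]
    apply Submodule.span_le.2
    rintro z hz
    rcases Set.mem_mul.1 hz with ⟨u, ⟨s, hs, rfl⟩, v, ⟨t, ht, rfl⟩, rfl⟩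
    refine Submodule.subset_span ⟨s + t, Set.mem_Ici.2 (add_le_add (Set.mem_Ici.1 hs) (Set.mem_Ici.1 ht)), ?_⟩
    show Nmat F n ^ (s + t) = Nmat F n ^ s * Nmat F n ^ t
    exact pow_add _ _ _
  exact hle (Submodule.mul_mem_mul hx hy)

lemma one_mem_P0 : (1 : Matrix (Fin n) (Fin n) F) ∈ Pm F n 0 := by
  have := pow_mem_Pm (F := F) (n := n) (k := 0) (m := 0) le_rfl
  rwa [pow_zero] at this

lemma Pm_pow {x : Matrix (Fin n) (Fin n) F} {m : ℕ} (hx : x ∈ Pm F n m) (k : ℕ) :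
    x ^ k ∈ Pm F n (k * m) := by
  induction k with
  | zero => simpa using one_mem_P0
  | succ k ih =>
    rw [pow_succ, Nat.succ_mul]
    exact Pm_mul ih hx

lemma P0_le_adjoin : Pm F n 0 ≤ Subalgebra.toSubmodule (Algebra.adjoin F {Nmat F n}) := by
  apply Submodule.span_le.2
  rintro x ⟨k, -, rfl⟩
  exact pow_mem (Algebra.self_mem_adjoin_singleton F _) k

lemma adjoin_le_P0 {x : Matrix (Fin n) (Fin n) F}
    (hx : x ∈ Algebra.adjoin F {Nmat F n}) : x ∈ Pm F n 0 := by
  rw [Algebra.adjoin_singleton_eq_range_aeval] at hx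
  obtain ⟨p, hp⟩ := hx
  have hp' : Polynomial.aeval (Nmat F n) p = x := hp
  rw [← hp', Polynomial.aeval_eq_sum_range]
  exact Submodule.sum_mem _ fun k _ =>
    Submodule.smul_mem _ _ (pow_mem_Pm (Nat.zero_le _))

lemma commute_P0 {x y : Matrix (Fin n) (Fin n) F}
    (hx : x ∈ Pm F n 0) (hy : y ∈ Pm F n 0) : Commute x y := by
  have hx' := P0_le_adjoin hx
  have hy' := P0_le_adjoin hy
  rw [Subalgebra.mem_toSubmodule, Algebra.adjoin_singleton_eq_range_aeval] at hx' hy'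
  obtain ⟨p, hp⟩ := hx'
  obtain ⟨q, hq⟩ := hy'
  have hp' : Polynomial.aeval (Nmat F n) p = x := hp
  have hq' : Polynomial.aeval (Nmat F n) q = y := hq
  subst hp' hq'
  unfold Commute SemiconjBy
  rw [← map_mul, ← map_mul, mul_comm]


lemma P1_apply_diag {x : Matrix (Fin n) (Fin n) F} (hx : x ∈ Pm F n 1) (i : Fin n) :
    x i i = 0 := by
  induction hx using Submodule.span_induction with
  | mem x h =>
    obtain ⟨k, hk, rfl⟩ := h
    show (Nmat F n ^ k) i i = 0
    have hk' : 1 ≤ k := hk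
    rw [Nmat_pow_apply, if_neg (by omega)]
  | zero => rfl
  | add x y hx hy ihx ihy => rw [Matrix.add_apply, ihx, ihy, add_zero]
  | smul a x hx ihx => rw [Matrix.smul_apply, ihx, smul_zero]

/-- the combinatorial reindexing -/
lemma sum_aux {M : Type*} [AddCommMonoid M] (n : ℕ) (g : ℕ × ℕ → M)
    (hg : ∀ p : ℕ × ℕ, n ≤ p.1 + p.2 → g p = 0) :
    ∑ k ∈ Finset.range n, ∑ p ∈ Finset.HasAntidiagonal.antidiagonal k, g p
      = ∑ i ∈ Finset.range n, ∑ j ∈ Finset.range n, g (i, j) := by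
  rw [← Finset.sum_product']
  rw [← Finset.sum_biUnion]
  · apply Finset.sum_subset
    · rintro ⟨i, j⟩ hp
      rw [Finset.mem_biUnion] at hp
      obtain ⟨k, hk, hmem⟩ := hp
      rw [Finset.HasAntidiagonal.mem_antidiagonal] at hmem
      rw [Finset.mem_range] at hk
      simp only [Finset.mem_product, Finset.mem_range]
      omega
    · rintro ⟨i, j⟩ hp hnp
      refine hg _ ?_
      by_contra hlt
      exact hnp (Finset.mem_biUnion.2 ⟨i + j, Finset.mem_range.2 (by omega),
        Finset.HasAntidiagonal.mem_antidiagonal.2 rfl⟩)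
  · intro a _ b _ hab
    simp only [Function.onFun]
    rw [Finset.disjoint_left]
    intro p hpa hpb
    rw [Finset.HasAntidiagonal.mem_antidiagonal] at hpa hpb
    exact hab (hpa ▸ hpb)

variable (hn : 0 < n) (hfac : ∀ k : ℕ, k < n → (Nat.factorial k : F) ≠ 0)

include hn in
lemma texp_zero : texp (0 : Matrix (Fin n) (Fin n) F) = 1 := by
  unfold texp
  rw [Finset.range_eq_Ico, Finset.sum_eq_sum_Ico_succ_bot hn]
  rw [Finset.sum_eq_zero, add_zero]
  · simp
  · intro k hk
    rw [Finset.mem_Ico] at hk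
    rw [zero_pow (by omega), smul_zero]

include hfac in
lemma texp_add {S T : Matrix (Fin n) (Fin n) F}
    (hS : S ∈ Pm F n 1) (hT : T ∈ Pm F n 1) :
    texp (S + T) = texp S * texp T := by
  have hcomm : Commute S T := commute_P0 (Pm_mono (Nat.zero_le 1) hS) (Pm_mono (Nat.zero_le 1) hT)
  unfold texp
  rw [Finset.sum_mul_sum]
  have hrhs : ∀ i j : ℕ, ((Nat.factorial i : F))⁻¹ • S ^ i * ((Nat.factorial j : F))⁻¹ • T ^ j
      = ((Nat.factorial i : F)⁻¹ * (Nat.factorial j : F)⁻¹) • (S ^ i * T ^ j) := by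
    intro i j
    rw [smul_mul_smul_comm]
  simp only [hrhs]
  have key : ∀ k ∈ Finset.range n, ((Nat.factorial k : F))⁻¹ • (S + T) ^ k
      = ∑ p ∈ Finset.HasAntidiagonal.antidiagonal k,
          ((Nat.factorial p.1 : F)⁻¹ * (Nat.factorial p.2 : F)⁻¹) • (S ^ p.1 * T ^ p.2) := by
    intro k hk
    rw [Finset.mem_range] at hk
    rw [hcomm.add_pow', Finset.smul_sum]
    apply Finset.sum_congr rfl
    rintro ⟨i, j⟩ hp
    rw [Finset.HasAntidiagonal.mem_antidiagonal] at hp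
    have h1 : (k.choose i • (S ^ i * T ^ j)) = ((k.choose i : F)) • (S ^ i * T ^ j) := by
      rw [Nat.cast_smul_eq_nsmul]
    rw [h1, smul_smul]
    congr 1
    have hik : i ≤ k := by omega
    have hfk := hfac k hk
    have hfi := hfac i (by omega)
    have hfj := hfac j (by omega)
    have hnat : (i + j).choose i * Nat.factorial i * Nat.factorial j
        = Nat.factorial (i + j) := by
      have h2 := Nat.choose_mul_factorial_mul_factorial (Nat.le_add_right i j)
      simpa [Nat.add_sub_cancel_left] using h2
    have hch : ((i + j).choose i : F) * (Nat.factorial i : F) * (Nat.factorial j : F)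
        = (Nat.factorial (i + j) : F) := by rw [← Nat.cast_mul, ← Nat.cast_mul, hnat]
    subst hp
    field_simp
    linear_combination hch
  rw [Finset.sum_congr rfl key]
  refine sum_aux n _ ?_
  rintro ⟨i, j⟩ hij
  have hzero : S ^ i * T ^ j = 0 := by
    have hm : S ^ i * T ^ j ∈ Pm F n (i * 1 + j * 1) := Pm_mul (Pm_pow hS i) (Pm_pow hT j)
    have hb := Pm_mono (show n ≤ i * 1 + j * 1 by simpa using hij) hm
    rw [Pm_bot] at hb
    exact (Submodule.mem_bot F).1 hb
  show _ • (S ^ i * T ^ j) = (0 : Matrix (Fin n) (Fin n) F)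
  rw [hzero, smul_zero]


include hn in
lemma texp_tail {S : Matrix (Fin n) (Fin n) F} {j : ℕ} (hj : 1 ≤ j)
    (hS : S ∈ Pm F n j) : texp S - 1 - S ∈ Pm F n (j + j) := by
  rcases lt_or_ge 1 n with h1n | h1n
  · have heq : texp S = 1 + S + ∑ k ∈ Finset.Ico 2 n, ((Nat.factorial k : F))⁻¹ • S ^ k := by
      rw [texp, Finset.range_eq_Ico, Finset.sum_eq_sum_Ico_succ_bot hn,
        Finset.sum_eq_sum_Ico_succ_bot h1n, pow_zero, pow_one]
      rw [Nat.factorial_zero, Nat.factorial_one, Nat.cast_one, inv_one, one_smul, one_smul,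
        add_assoc]
    have : texp S - 1 - S = ∑ k ∈ Finset.Ico 2 n, ((Nat.factorial k : F))⁻¹ • S ^ k := by
      rw [heq]; abel
    rw [this]
    refine Submodule.sum_mem _ ?_
    intro k hk
    rw [Finset.mem_Ico] at hk
    refine Submodule.smul_mem _ _ ?_
    refine Pm_mono ?_ (Pm_pow hS k)
    calc j + j = 2 * j := by omega
    _ ≤ k * j := Nat.mul_le_mul_right j hk.1
  · -- n = 1, so S ∈ Pm F n j ≤ Pm F n 1 = Pm F n n = ⊥
    have hn1 : n = 1 := by omega
    have hS0 : S = 0 := by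
      have := Pm_mono hj hS
      rw [show (1 : ℕ) = n from hn1.symm, Pm_bot] at this
      exact (Submodule.mem_bot F).1 this
    rw [hS0, texp_zero hn]
    simp

include hn hfac in
lemma texp_isUnit {S : Matrix (Fin n) (Fin n) F} (hS : S ∈ Pm F n 1) :
    IsUnit (texp S) := by
  refine isUnit_iff_exists.2 ⟨texp (-S), ?_, ?_⟩
  · rw [← texp_add hfac hS (neg_mem hS), add_neg_cancel, texp_zero hn]
  · rw [← texp_add hfac (neg_mem hS) hS, neg_add_cancel, texp_zero hn]

include hn in
lemma eq_zero_of_texp_eq_one {S : Matrix (Fin n) (Fin n) F} (hS : S ∈ Pm F n 1)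
    (h : texp S = 1) : S = 0 := by
  have key : ∀ k : ℕ, S ∈ Pm F n (2 ^ k) := by
    intro k
    induction k with
    | zero => simpa using hS
    | succ k ih =>
      have h2 : 1 ≤ 2 ^ k := Nat.one_le_two_pow
      have htail := texp_tail hn h2 ih
      rw [h] at htail
      have : S = -(1 - 1 - S) := by abel
      rw [this]
      have h22 : (2 : ℕ) ^ (k + 1) = 2 ^ k + 2 ^ k := by ring
      rw [h22]
      exact neg_mem htail
  have := Pm_mono (le_of_lt ((Nat.lt_two_pow_self (n := n)))) (key n)
  rw [Pm_bot] at this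
  exact (Submodule.mem_bot F).1 this

include hn hfac in
lemma texp_inj {S T : Matrix (Fin n) (Fin n) F} (hS : S ∈ Pm F n 1)
    (hT : T ∈ Pm F n 1) (h : texp S = texp T) : S = T := by
  have h1 : texp (S - T) * texp T = texp T := by
    rw [← texp_add hfac (sub_mem hS hT) hT, sub_add_cancel, h]
  have h2 : texp (S - T) = 1 :=
    (texp_isUnit hn hfac hT).mul_right_cancel (by rw [h1, one_mul])
  have := eq_zero_of_texp_eq_one hn (sub_mem hS hT) h2
  rwa [sub_eq_zero] at this

include hn hfac in
lemma texp_surj_aux (m : ℕ) {Z : Matrix (Fin n) (Fin n) F} (hZ : Z ∈ Pm F n 1) :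
    ∃ S ∈ Pm F n 1, ∃ D ∈ Pm F n (m + 1), texp S = 1 + Z + D := by
  induction m with
  | zero =>
    refine ⟨0, zero_mem _, -Z, neg_mem hZ, ?_⟩
    rw [texp_zero hn]; abel
  | succ m ih =>
    obtain ⟨S, hS, D, hD, hSD⟩ := ih
    have hD1 : D ∈ Pm F n 1 := Pm_mono (by omega) hD
    have heq : texp (S - D) = texp S * texp (-D) := by
      rw [sub_eq_add_neg, texp_add hfac hS (neg_mem hD1)]
    have hEmem : texp (-D) - 1 - (-D) ∈ Pm F n (m + 2) := by
      refine Pm_mono (by omega) (texp_tail hn (by omega) (neg_mem hD))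
    refine ⟨S - D, sub_mem hS hD1,
      -((Z + D) * D) + (1 + Z + D) * (texp (-D) - 1 - (-D)), ?_, ?_⟩
    · refine add_mem (neg_mem ?_) ?_
      · have h1 : (Z + D) * D ∈ Pm F n (1 + (m + 1)) := Pm_mul (add_mem hZ hD1) hD
        rwa [show 1 + (m + 1) = m + 1 + 1 from by omega] at h1
      · have h0 : (1 : Matrix (Fin n) (Fin n) F) + Z + D ∈ Pm F n 0 :=
          add_mem (add_mem one_mem_P0 (Pm_mono (Nat.zero_le 1) hZ)) (Pm_mono (Nat.zero_le 1) hD1)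
        have h2 : (1 + Z + D) * (texp (-D) - 1 - (-D)) ∈ Pm F n (0 + (m + 2)) :=
          Pm_mul h0 hEmem
        simpa using h2
    · rw [heq, hSD]
      noncomm_ring

include hn hfac in
lemma texp_surj {Z : Matrix (Fin n) (Fin n) F} (hZ : Z ∈ Pm F n 1) :
    ∃ S ∈ Pm F n 1, texp S = 1 + Z := by
  obtain ⟨S, hS, D, hD, hSD⟩ := texp_surj_aux hn hfac (n - 1) hZ
  rw [show n - 1 + 1 = n from by omega, Pm_bot] at hD
  rw [(Submodule.mem_bot F).1 hD, add_zero] at hSD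
  exact ⟨S, hS, hSD⟩

include hn in
lemma mem_P1_iff {x : Matrix (Fin n) (Fin n) F} :
    x ∈ Pm F n 1 ↔ ∃ c : Fin (n - 1) → F, ∑ k, c k • Nmat F n ^ ((k : ℕ) + 1) = x := by
  have hP1 : Pm F n 1
      = Submodule.span F (Set.range fun k : Fin (n - 1) => Nmat F n ^ ((k : ℕ) + 1)) := by
    apply le_antisymm
    · apply Submodule.span_le.2
      rintro y ⟨k, hk, rfl⟩
      simp only [Set.mem_Ici] at hk
      rcases lt_or_ge k n with hkn | hkn
      · apply Submodule.subset_span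
        refine ⟨⟨k - 1, by omega⟩, ?_⟩
        show Nmat F n ^ (k - 1 + 1) = Nmat F n ^ k
        congr 1
        omega
      · show Nmat F n ^ k ∈ _
        rw [Nmat_pow_eq_zero hkn]
        exact zero_mem _
    · apply Submodule.span_le.2
      rintro y ⟨k, rfl⟩
      exact pow_mem_Pm (by omega)
  rw [hP1, Submodule.mem_span_range_iff_exists_fun]

include hn in
lemma sum_coeff_apply (c : Fin (n - 1) → F) (k : Fin (n - 1)) :
    (∑ j, c j • Nmat F n ^ ((j : ℕ) + 1)) ⟨0, hn⟩ ⟨(k : ℕ) + 1, by have := k.2; omega⟩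
      = c k := by
  rw [Matrix.sum_apply]
  rw [Finset.sum_eq_single k]
  · rw [Matrix.smul_apply, Nmat_pow_apply]
    simp
  · intro j _ hj
    rw [Matrix.smul_apply, Nmat_pow_apply, if_neg, smul_zero]
    simp only [Fin.val_mk]
    intro hcon
    exact hj (Fin.ext (by omega))
  · intro h; exact absurd (Finset.mem_univ _) h

include hn in
lemma texp_apply_diag {S : Matrix (Fin n) (Fin n) F} (hS : S ∈ Pm F n 1) (i : Fin n) :
    texp S i i = 1 := by
  have h1 : texp S - 1 ∈ Pm F n 1 := by
    have h3 : texp S - 1 - S + S ∈ Pm F n 1 :=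
      add_mem (Pm_mono (by omega) (texp_tail hn le_rfl hS)) hS
    simpa using h3
  have h4 := P1_apply_diag h1 i
  rw [Matrix.sub_apply, Matrix.one_apply_eq, sub_eq_zero] at h4
  exact h4


lemma P0_decomp {x : Matrix (Fin n) (Fin n) F} (hx : x ∈ Pm F n 0) :
    ∃ c : F, ∃ Z ∈ Pm F n 1, x = c • 1 + Z := by
  have hle : Pm F n 0 ≤ Submodule.span F {(1 : Matrix (Fin n) (Fin n) F)} ⊔ Pm F n 1 := by
    apply Submodule.span_le.2
    rintro y ⟨k, -, rfl⟩
    rcases Nat.eq_zero_or_pos k with h | h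
    · subst h
      apply Submodule.mem_sup_left
      apply Submodule.subset_span
      show Nmat F n ^ 0 ∈ _
      rw [pow_zero]
      rfl
    · exact Submodule.mem_sup_right (pow_mem_Pm h)
  obtain ⟨y, hy, z, hz, rfl⟩ := Submodule.mem_sup.1 (hle hx)
  obtain ⟨c, rfl⟩ := Submodule.mem_span_singleton.1 hy
  exact ⟨c, z, hz, rfl⟩

end JordanAux

open JordanAux

/-- For `char F = 0` or `char F > n`, the map
`(r, s₁,…,s_{n−1}) ↦ r·exp(Σ s_k N^k)` (`N = J_n(0)`) is a group isomorphism
from `Fˣ × F^{n−1}` onto the unit group `F[J_n(a)]ˣ`. -/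
theorem units_of_jordan_algebra_iso {F : Type*} [Field F] {n : ℕ} (hn : 0 < n)
    (hchar : ∀ k : ℕ, 0 < k → k ≤ n → (k : F) ≠ 0) (a : F) :
    let N : Matrix (Fin n) (Fin n) F := jordanBlock F n 0
    let ψ : Fˣ × (Fin (n - 1) → F) → Matrix (Fin n) (Fin n) F :=
      fun p => (p.1 : F) • texp (∑ k : Fin (n - 1), p.2 k • N ^ ((k : ℕ) + 1))
    (∀ p q : Fˣ × (Fin (n - 1) → F), ψ (p.1 * q.1, p.2 + q.2) = ψ p * ψ q) ∧
    Function.Injective ψ ∧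
    (∀ M : Matrix (Fin n) (Fin n) F,
      (∃ p, ψ p = M) ↔ M ∈ Algebra.adjoin F {jordanBlock F n a} ∧ IsUnit M) := by
  intro N ψ
  have hψ : ∀ p : Fˣ × (Fin (n - 1) → F),
      ψ p = (p.1 : F) • texp (∑ k : Fin (n - 1), p.2 k • Nmat F n ^ ((k : ℕ) + 1)) :=
    fun _ => rfl
  have hfac : ∀ k : ℕ, k < n → (Nat.factorial k : F) ≠ 0 := by
    intro k hk
    induction k with
    | zero => simp
    | succ k ih =>
      rw [Nat.factorial_succ, Nat.cast_mul]
      exact mul_ne_zero (hchar (k + 1) (by omega) (by omega)) (ih (by omega))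
  have hmem : ∀ s : Fin (n - 1) → F,
      (∑ k : Fin (n - 1), s k • Nmat F n ^ ((k : ℕ) + 1)) ∈ Pm F n 1 :=
    fun s => Submodule.sum_mem _ fun k _ => Submodule.smul_mem _ _ (pow_mem_Pm (by omega))
  have hadj : Algebra.adjoin F ({jordanBlock F n a} : Set (Matrix (Fin n) (Fin n) F))
      = Algebra.adjoin F {Nmat F n} := by
    have hJ : jordanBlock F n a = a • (1 : Matrix (Fin n) (Fin n) F) + Nmat F n := by
      ext i j
      show (if (i : ℕ) = (j : ℕ) then a else if (i : ℕ) + 1 = (j : ℕ) then 1 else 0) = _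
      rw [Matrix.add_apply, Matrix.smul_apply, Matrix.one_apply, Nmat_apply]
      rcases eq_or_ne i j with h | h
      · rw [if_pos (by rw [h]), if_pos h, if_neg (by rw [Fin.ext_iff] at h; omega)]
        simp
      · rw [if_neg (fun hc => h (Fin.ext hc)), if_neg h]
        simp
    apply le_antisymm
    · rw [Algebra.adjoin_le_iff]
      intro x hx
      rw [Set.mem_singleton_iff] at hx
      subst hx
      rw [hJ]
      exact add_mem (Subalgebra.smul_mem _ (one_mem _) a)
        (Algebra.self_mem_adjoin_singleton F _)
    · rw [Algebra.adjoin_le_iff]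
      intro x hx
      rw [Set.mem_singleton_iff] at hx
      subst hx
      have : Nmat F n = jordanBlock F n a - a • (1 : Matrix (Fin n) (Fin n) F) := by
        rw [hJ]; abel
      rw [this]
      exact sub_mem (Algebra.self_mem_adjoin_singleton F _)
        (Subalgebra.smul_mem _ (one_mem _) a)
  refine ⟨?_, ?_, ?_⟩
  · -- multiplicativity
    intro p q
    rw [hψ, hψ, hψ]
    have hsum : (∑ k : Fin (n - 1), (p.2 + q.2) k • Nmat F n ^ ((k : ℕ) + 1))
        = (∑ k : Fin (n - 1), p.2 k • Nmat F n ^ ((k : ℕ) + 1))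
          + (∑ k : Fin (n - 1), q.2 k • Nmat F n ^ ((k : ℕ) + 1)) := by
      rw [← Finset.sum_add_distrib]
      exact Finset.sum_congr rfl fun k _ => by rw [Pi.add_apply, add_smul]
    show ((p.1 * q.1 : Fˣ) : F) • _ = _
    rw [hsum, texp_add hfac (hmem p.2) (hmem q.2), Units.val_mul]
    exact (smul_mul_smul_comm _ _ _ _).symm
  · -- injectivity
    rintro ⟨r, s⟩ ⟨u, t⟩ h
    rw [hψ, hψ] at h
    simp only at h
    have hdiag := congrFun (congrFun h ⟨0, hn⟩) ⟨0, hn⟩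
    rw [Matrix.smul_apply, Matrix.smul_apply, texp_apply_diag hn (hmem s),
      texp_apply_diag hn (hmem t), smul_eq_mul, smul_eq_mul, mul_one, mul_one] at hdiag
    have hru : r = u := Units.ext hdiag
    subst hru
    have hT : texp (∑ k : Fin (n - 1), s k • Nmat F n ^ ((k : ℕ) + 1))
        = texp (∑ k : Fin (n - 1), t k • Nmat F n ^ ((k : ℕ) + 1)) :=
      smul_right_injective _ (Units.ne_zero r) h
    have hST := texp_inj hn hfac (hmem s) (hmem t) hT
    have hst : s = t := by
      funext k
      have hzero : (∑ j : Fin (n - 1), (fun i => s i - t i) j • Nmat F n ^ ((j : ℕ) + 1)) = 0 := by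
        simp only [sub_smul]
        rw [Finset.sum_sub_distrib, hST, sub_self]
      have := congrFun (congrFun hzero ⟨0, hn⟩) ⟨(k : ℕ) + 1, by have := k.2; omega⟩
      rw [sum_coeff_apply hn (fun i => s i - t i) k] at this
      rw [Matrix.zero_apply] at this
      exact sub_eq_zero.1 this
    rw [hst]
  · -- image
    intro M
    constructor
    · rintro ⟨p, rfl⟩
      rw [hψ]
      have h0 : texp (∑ k : Fin (n - 1), p.2 k • Nmat F n ^ ((k : ℕ) + 1)) ∈ Pm F n 0 := by
        refine Submodule.sum_mem _ fun k _ => Submodule.smul_mem _ _ ?_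
        exact Pm_pow (Pm_mono (Nat.zero_le 1) (hmem p.2)) k
      constructor
      · rw [hadj]
        exact Subalgebra.smul_mem _ (P0_le_adjoin h0) _
      · have hu := texp_isUnit hn hfac (hmem p.2)
        have := hu.smul p.1
        rwa [Units.smul_def] at this
    · rintro ⟨hmemM, hunit⟩
      rw [hadj] at hmemM
      have h0 : M ∈ Pm F n 0 := adjoin_le_P0 hmemM
      obtain ⟨c, Z, hZ, rfl⟩ := P0_decomp h0
      have hc : c ≠ 0 := by
        rintro rfl
        rw [zero_smul, zero_add] at hunit
        have hZn : Z ^ n = 0 := by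
          have h1 := Pm_pow hZ n
          rw [mul_one, Pm_bot] at h1
          exact (Submodule.mem_bot F).1 h1
        have h2 := hunit.pow n
        rw [hZn, isUnit_zero_iff] at h2
        have h3 := congrFun (congrFun h2 ⟨0, hn⟩) ⟨0, hn⟩
        rw [Matrix.zero_apply, Matrix.one_apply_eq] at h3
        exact one_ne_zero h3.symm
      have hZ' : c⁻¹ • Z ∈ Pm F n 1 := Submodule.smul_mem _ _ hZ
      obtain ⟨S, hS, hSZ⟩ := texp_surj hn hfac hZ'
      obtain ⟨s, hs⟩ := (mem_P1_iff hn).1 hS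
      refine ⟨(Units.mk0 c hc, s), ?_⟩
      rw [hψ]
      show (c : F) • texp (∑ k : Fin (n - 1), s k • Nmat F n ^ ((k : ℕ) + 1)) = c • 1 + Z
      rw [hs, hSZ, smul_add, smul_smul, mul_inv_cancel₀ hc, one_smul]
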